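/- Let X be a Banach space with a norm whose modulus of uniform convexity is of power type p ≥ 2 with constant A, i.e. ‖(x+y)/2‖ ≤ 1 − A‖x−y‖ᵖ for x, y in the unit ball, and let Ψ : [0,∞) → [0,∞) be convex nondecreasing with modulus of uniform convexity δ_Ψ(ε) = Bεᵖ and right derivative Ψ′₊(t) ≥ K t^{p−1} for all t > 0, where A ∈ (0, 1/2], B, K > 0. Then x ↦ Ψ(‖x‖) is uniformly convex on X with modulus of power type p; concretely, ½Ψ(‖x‖) + ½Ψ(‖y‖) − Ψ(‖(x+y)/2‖) ≥ min{B/2ᵖ, AK/8ᵖ}·‖x−y‖ᵖ for all x, y ∈ X. -/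

import Mathlib

/-- Borwein–Vanderwerff (power type case): if the norm has modulus of uniform
convexity of power type `p` with constant `A` and `Ψ` is convex nondecreasing with
power type `p` modulus `B εᵖ` and right derivative `Ψ′₊(t) ≥ K t^{p−1}`, then
`Ψ ∘ ‖·‖` is uniformly convex with modulus `min{B/2ᵖ, AK/8ᵖ}·εᵖ`. -/
theorem stmt_13 {X : Type*} [NormedAddCommGroup X] [NormedSpace ℝ X]
    (p A B K : ℝ) (hp : 2 ≤ p) (hA : 0 < A) (hA2 : A ≤ 1/2) (hB : 0 < B) (hK : 0 < K)
    (hX : ∀ u v : X, ‖u‖ ≤ 1 → ‖v‖ ≤ 1 → ‖(1/2 : ℝ) • (u + v)‖ ≤ 1 - A * ‖u - v‖ ^ p)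
    (Ψ : ℝ → ℝ) (hΨconv : ConvexOn ℝ (Set.Ici 0) Ψ) (hΨmono : MonotoneOn Ψ (Set.Ici 0))
    (hΨuc : ∀ a b : ℝ, 0 ≤ a → 0 ≤ b →
      Ψ ((a + b) / 2) ≤ Ψ a / 2 + Ψ b / 2 - B * |a - b| ^ p)
    (Ψ' : ℝ → ℝ)
    (hΨd : ∀ t > (0:ℝ), HasDerivWithinAt Ψ (Ψ' t) (Set.Ici t) t)
    (hΨ'K : ∀ t > (0:ℝ), K * t ^ (p - 1) ≤ Ψ' t) :
    ∀ x y : X,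
      min (B / 2 ^ p) (A * K / 8 ^ p) * ‖x - y‖ ^ p ≤
        Ψ ‖x‖ / 2 + Ψ ‖y‖ / 2 - Ψ ‖(1/2 : ℝ) • (x + y)‖ := by
  have key : ∀ x y : X, ‖y‖ ≤ ‖x‖ →
      min (B / 2 ^ p) (A * K / 8 ^ p) * ‖x - y‖ ^ p ≤
        Ψ ‖x‖ / 2 + Ψ ‖y‖ / 2 - Ψ ‖(1/2 : ℝ) • (x + y)‖ := by
    intro x y hba
    have hp1 : (0:ℝ) ≤ p - 1 := by linarith
    have hp0 : (0:ℝ) ≤ p := by linarith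
    set a := ‖x‖ with ha_def
    set b := ‖y‖ with hb_def
    set d := ‖x - y‖ with hd_def
    set m := ‖(1/2 : ℝ) • (x + y)‖ with hm_def
    have ha0 : 0 ≤ a := norm_nonneg x
    have hb0 : 0 ≤ b := norm_nonneg y
    have hd0 : 0 ≤ d := norm_nonneg _
    have hm0 : 0 ≤ m := norm_nonneg _
    have hdab : d ≤ a + b := norm_sub_le x y
    have hmhalf : m = ‖x + y‖ / 2 := by
      rw [hm_def, norm_smul, Real.norm_eq_abs, abs_of_pos (by norm_num : (0:ℝ) < 1/2)]
      ring
    have hmab : m ≤ (a + b) / 2 := by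
      rw [hmhalf]
      have := norm_add_le x y
      linarith
    have hdpow0 : 0 ≤ d ^ p := Real.rpow_nonneg hd0 p
    rcases le_or_gt (d / 2) (a - b) with hcase | hcase
    · -- Case 1 : |a - b| ≥ d/2, use uniform convexity of Ψ
      have hmono : Ψ m ≤ Ψ ((a + b) / 2) :=
        hΨmono (Set.mem_Ici.mpr hm0) (Set.mem_Ici.mpr (by linarith)) hmab
      have huc := hΨuc a b ha0 hb0
      rw [abs_of_nonneg (by linarith : (0:ℝ) ≤ a - b)] at huc
      have h1 : B * (d / 2) ^ p ≤ B * (a - b) ^ p := by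
        apply mul_le_mul_of_nonneg_left _ hB.le
        exact Real.rpow_le_rpow (by positivity) hcase hp0
      have h2 : min (B / 2 ^ p) (A * K / 8 ^ p) * d ^ p ≤ B * (d / 2) ^ p := by
        have hdiv : (d / 2) ^ p = d ^ p / 2 ^ p := Real.div_rpow hd0 (by norm_num) p
        calc min (B / 2 ^ p) (A * K / 8 ^ p) * d ^ p
            ≤ (B / 2 ^ p) * d ^ p := mul_le_mul_of_nonneg_right (min_le_left _ _) hdpow0
          _ = B * (d ^ p / 2 ^ p) := by ring
          _ = B * (d / 2) ^ p := by rw [hdiv]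
      linarith
    · -- Case 2 : |a - b| < d/2, use uniform convexity of the norm
      have hab0 : 0 ≤ a - b := sub_nonneg.mpr hba
      have hd_pos : 0 < d := by linarith
      have ha_half : d / 2 ≤ a := by linarith
      have hb_pos : 0 < b := by linarith
      have ha_pos : 0 < a := lt_of_lt_of_le hb_pos hba
      set x' := (b / a) • x with hx'_def
      have hx'_norm : ‖x'‖ = b := by
        rw [hx'_def, norm_smul, Real.norm_eq_abs, abs_of_nonneg (by positivity)]
        field_simp
        exact ha_def.symm
      have hxx' : ‖x - x'‖ = a - b := by
        have hsub : x - x' = (1 - b / a) • x := by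
          rw [hx'_def, sub_smul, one_smul]
        rw [hsub, norm_smul, Real.norm_eq_abs,
          abs_of_nonneg (by rw [sub_nonneg]; exact div_le_one_of_le₀ hba ha0)]
        field_simp
        rw [← ha_def]; ring
      have hx'y : d / 2 ≤ ‖x' - y‖ := by
        have htri : d ≤ ‖x - x'‖ + ‖x' - y‖ := by
          calc d = ‖(x - x') + (x' - y)‖ := by rw [hd_def]; abel_nf
            _ ≤ ‖x - x'‖ + ‖x' - y‖ := norm_add_le _ _
        rw [hxx'] at htri
        linarith
      have hx'y0 : 0 ≤ ‖x' - y‖ := norm_nonneg _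
      -- apply the norm's uniform convexity at radius b
      have hu1 : ‖b⁻¹ • x'‖ ≤ 1 := by
        rw [norm_smul, Real.norm_eq_abs, abs_of_nonneg (by positivity), hx'_norm,
          inv_mul_cancel₀ hb_pos.ne']
      have hv1 : ‖b⁻¹ • y‖ ≤ 1 := by
        rw [norm_smul, Real.norm_eq_abs, abs_of_nonneg (by positivity), ← hb_def,
          inv_mul_cancel₀ hb_pos.ne']
      have hXapp := hX (b⁻¹ • x') (b⁻¹ • y) hu1 hv1
      have e1 : (1/2 : ℝ) • (b⁻¹ • x' + b⁻¹ • y) = b⁻¹ • ((1/2 : ℝ) • (x' + y)) := by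
        rw [← smul_add, smul_comm]
      have e2 : b⁻¹ • x' - b⁻¹ • y = b⁻¹ • (x' - y) := (smul_sub _ _ _).symm
      rw [e1, e2] at hXapp
      rw [norm_smul b⁻¹ ((1/2 : ℝ) • (x' + y)), norm_smul b⁻¹ (x' - y), Real.norm_eq_abs,
        abs_of_nonneg (by positivity : (0:ℝ) ≤ b⁻¹)] at hXapp
      -- hXapp : b⁻¹ * ‖(1/2)•(x'+y)‖ ≤ 1 - A * (b⁻¹ * ‖x'-y‖)^p
      set N := ‖(1/2 : ℝ) • (x' + y)‖ with hN_def
      have hN0 : 0 ≤ N := norm_nonneg _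
      set c3 := A * (d / 2) ^ p / b ^ (p - 1) with hc3_def
      have hbp1_pos : 0 < b ^ (p - 1) := Real.rpow_pos_of_pos hb_pos _
      have hc3_pos : 0 < c3 := by positivity
      have hbp_eq : b ^ p = b ^ (p - 1) * b := by
        rw [← Real.rpow_add_one hb_pos.ne' (p - 1)]
        ring_nf
      have hmono_pow : A * ((d / 2) / b) ^ p ≤ A * (b⁻¹ * ‖x' - y‖) ^ p := by
        apply mul_le_mul_of_nonneg_left _ hA.le
        apply Real.rpow_le_rpow (by positivity) _ hp0
        rw [inv_mul_eq_div]
        gcongr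
      have hN_le : N ≤ b - c3 := by
        have h5 : b⁻¹ * N ≤ 1 - A * ((d / 2) / b) ^ p := by linarith
        have h6 : N ≤ b * (1 - A * ((d / 2) / b) ^ p) := by
          have := mul_le_mul_of_nonneg_left h5 hb_pos.le
          rw [mul_inv_cancel_left₀ hb_pos.ne'] at this
          linarith
        have h7 : b * (1 - A * ((d / 2) / b) ^ p) = b - c3 := by
          rw [Real.div_rpow (by positivity) hb0, hc3_def, hbp_eq]
          field_simp
        linarith [h7 ▸ h6]
      -- midpoint bound : m ≤ t - c3
      set t := (a + b) / 2 with ht_def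
      have hm_le : m ≤ t - c3 := by
        have hsplit : (1/2 : ℝ) • (x + y) = (1/2 : ℝ) • (x' + y) + (1/2 : ℝ) • (x - x') := by
          rw [← smul_add]
          congr 1
          abel
        have htri : m ≤ N + ‖(1/2 : ℝ) • (x - x')‖ := by
          rw [hm_def, hsplit]
          exact norm_add_le _ _
        have hhalf : ‖(1/2 : ℝ) • (x - x')‖ = (a - b) / 2 := by
          rw [norm_smul, Real.norm_eq_abs, hxx', abs_of_pos (by norm_num : (0:ℝ) < 1/2)]
          ring
        rw [hhalf] at htri
        rw [ht_def]
        linarith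
      have ht_half : d / 2 ≤ t := by rw [ht_def]; linarith
      have ht_pos : 0 < t := by linarith
      have htb : b ≤ t := by rw [ht_def]; linarith
      set c' := min c3 (t / 2) with hc'_def
      have hc'_pos : 0 < c' := lt_min hc3_pos (by positivity)
      set u := t - c' with hu_def
      have hu_ge : t / 2 ≤ u := by
        have := min_le_right c3 (t / 2)
        rw [hu_def]; linarith
      have hu_pos : 0 < u := by linarith
      have hu_lt : u < t := by rw [hu_def]; linarith
      have hmu : m ≤ u := by
        have := min_le_left c3 (t / 2)
        rw [hu_def]; linarith
      -- monotonicity and slope estimates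
      have hΨm_le : Ψ m ≤ Ψ u :=
        hΨmono (Set.mem_Ici.mpr hm0) (Set.mem_Ici.mpr hu_pos.le) hmu
      have hslope : Ψ' u ≤ (Ψ t - Ψ u) / (t - u) := by
        have hder : HasDerivWithinAt Ψ (Ψ' u) (Set.Ioi u) u :=
          (hΨd u hu_pos).mono Set.Ioi_subset_Ici_self
        have := hΨconv.le_slope_of_hasDerivWithinAt_Ioi (Set.mem_Ici.mpr hu_pos.le)
          (Set.mem_Ici.mpr ht_pos.le) hu_lt hder
        rwa [slope_def_field] at this
      have hKu : K * u ^ (p - 1) ≤ Ψ' u := hΨ'K u hu_pos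
      have htu : t - u = c' := by rw [hu_def]; ring
      have hgrow : K * u ^ (p - 1) * c' ≤ Ψ t - Ψ u := by
        have h8 : K * u ^ (p - 1) ≤ (Ψ t - Ψ u) / c' := by
          rw [← htu]; exact hKu.trans hslope
        calc K * u ^ (p - 1) * c' ≤ ((Ψ t - Ψ u) / c') * c' :=
              mul_le_mul_of_nonneg_right h8 hc'_pos.le
          _ = Ψ t - Ψ u := div_mul_cancel₀ _ hc'_pos.ne'
      have hmidconv : Ψ t ≤ Ψ a / 2 + Ψ b / 2 := by
        have huc := hΨuc a b ha0 hb0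
        have : 0 ≤ B * |a - b| ^ p := by positivity
        rw [ht_def]; linarith
      -- it suffices to bound min * d^p by K * u^(p-1) * c'
      suffices hfin : min (B / 2 ^ p) (A * K / 8 ^ p) * d ^ p ≤ K * u ^ (p - 1) * c' by
        linarith
      have hmin8 : min (B / 2 ^ p) (A * K / 8 ^ p) * d ^ p ≤ A * K * (d / 8) ^ p := by
        have h8 : (d / 8) ^ p = d ^ p / 8 ^ p := Real.div_rpow hd0 (by norm_num) p
        calc min (B / 2 ^ p) (A * K / 8 ^ p) * d ^ p
            ≤ (A * K / 8 ^ p) * d ^ p := mul_le_mul_of_nonneg_right (min_le_right _ _) hdpow0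
          _ = A * K * (d ^ p / 8 ^ p) := by ring
          _ = A * K * (d / 8) ^ p := by rw [h8]
      have hu_rp : (t / 2) ^ (p - 1) ≤ u ^ (p - 1) :=
        Real.rpow_le_rpow (by positivity) hu_ge hp1
      have hd84 : (d / 8) ^ p ≤ (d / 4) ^ p :=
        Real.rpow_le_rpow (by positivity) (by linarith) hp0
      refine hmin8.trans ?_
      rcases min_cases c3 (t / 2) with ⟨hc'eq, _⟩ | ⟨hc'eq, hlt⟩
      · -- c' = c3
        have hbt : (b / 2) ^ (p - 1) ≤ (t / 2) ^ (p - 1) :=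
          Real.rpow_le_rpow (by positivity) (by linarith) hp1
        have hkey : K * (b / 2) ^ (p - 1) * c3 = K * A * (d / 2) ^ p / 2 ^ (p - 1) := by
          rw [hc3_def, Real.div_rpow hb0 (by norm_num)]
          field_simp
        have h2p : (2:ℝ) ^ (p - 1) ≤ 2 ^ p :=
          Real.rpow_le_rpow_of_exponent_le (by norm_num) (by linarith)
        have h2p1_pos : (0:ℝ) < 2 ^ (p - 1) := Real.rpow_pos_of_pos (by norm_num) _
        have h2pp_pos : (0:ℝ) < 2 ^ p := Real.rpow_pos_of_pos (by norm_num) _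
        have hdp2 : (d / 2) ^ p / 2 ^ p = (d / 4) ^ p := by
          rw [← Real.div_rpow (by positivity) (by norm_num : (0:ℝ) ≤ 2)]
          congr 1
          ring
        have hstep : A * K * (d / 8) ^ p ≤ K * (b / 2) ^ (p - 1) * c3 := by
          rw [hkey]
          have h9 : K * A * (d / 2) ^ p / 2 ^ p ≤ K * A * (d / 2) ^ p / 2 ^ (p - 1) := by
            apply div_le_div_of_nonneg_left (by positivity) h2p1_pos h2p
          calc A * K * (d / 8) ^ p ≤ A * K * (d / 4) ^ p :=
                mul_le_mul_of_nonneg_left hd84 (by positivity)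
            _ = K * A * ((d / 2) ^ p / 2 ^ p) := by rw [hdp2]; ring
            _ = K * A * (d / 2) ^ p / 2 ^ p := by ring
            _ ≤ K * A * (d / 2) ^ p / 2 ^ (p - 1) := h9
        refine hstep.trans ?_
        rw [hc'_def, hc'eq]
        have := hbt.trans hu_rp
        exact mul_le_mul_of_nonneg_right (mul_le_mul_of_nonneg_left this hK.le) hc3_pos.le
      · -- c' = t/2
        rw [hc'_def, hc'eq]
        have hpow : (t / 2) ^ (p - 1) * (t / 2) = (t / 2) ^ p := by
          rw [← Real.rpow_add_one (by positivity : (t/2 : ℝ) ≠ 0) (p - 1)]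
          ring_nf
        have hd4t : (d / 4) ^ p ≤ (t / 2) ^ p :=
          Real.rpow_le_rpow (by positivity) (by linarith) hp0
        calc A * K * (d / 8) ^ p ≤ 1 * K * (d / 8) ^ p := by
              have : A ≤ 1 := by linarith
              apply mul_le_mul_of_nonneg_right (mul_le_mul_of_nonneg_right this hK.le)
                (Real.rpow_nonneg (by positivity) p)
          _ = K * (d / 8) ^ p := by ring
          _ ≤ K * (d / 4) ^ p := mul_le_mul_of_nonneg_left hd84 hK.le
          _ ≤ K * (t / 2) ^ p := mul_le_mul_of_nonneg_left hd4t hK.le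
          _ = K * (t / 2) ^ (p - 1) * (t / 2) := by rw [← hpow]; ring
          _ ≤ K * u ^ (p - 1) * (t / 2) := by
              apply mul_le_mul_of_nonneg_right _ (by positivity)
              exact mul_le_mul_of_nonneg_left hu_rp hK.le
  intro x y
  rcases le_total ‖y‖ ‖x‖ with h | h
  · exact key x y h
  · have hk := key y x h
    rw [norm_sub_rev y x, add_comm y x] at hk
    linarith
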